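/- Among all randomized classifiers whose false positive rate equals r on both groups (hence satisfying Predictive Equality), the group-wise mass-threshold classifier f_r achieving FPR r on each group minimizes the 0-1 loss; any such classifier differing from f_r on a set of positive probability has strictly larger loss. -/
import Mathlib


open Finset

/-- `P` is a probability distribution on `X × Z × Y` with `Z = Bool` (group, `true` = A,
`false` = D) and `Y = Bool` (label, `true` = 1). -/
def IsDist {X : Type*} [Fintype X] (P : X × Bool × Bool → ℝ) : Prop :=
  (∀ p, 0 ≤ P p) ∧ ∑ p : X × Bool × Bool, P p = 1

/-- mass of the feature-group cell `(x, z)`. -/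
noncomputable def cellMass {X : Type*} (P : X × Bool × Bool → ℝ) (x : X) (z : Bool) : ℝ :=
  P (x, z, false) + P (x, z, true)

/-- total mass of group `z`. -/
noncomputable def gMass {X : Type*} [Fintype X] (P : X × Bool × Bool → ℝ) (z : Bool) : ℝ :=
  ∑ x, cellMass P x z

/-- score of the cell `(x, z)`: `Pr[Y = 1 | X = x, Z = z]`. -/
noncomputable def score {X : Type*} (P : X × Bool × Bool → ℝ) (x : X) (z : Bool) : ℝ :=
  P (x, z, true) / cellMass P x z

/-- A randomized classifier takes values in `[0,1]`. -/
def InUnit {X : Type*} (f : X × Bool → ℝ) : Prop := ∀ p, f p ∈ Set.Icc (0 : ℝ) 1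

/-- selection rate of randomized classifier `f` on group `z`: `E[f(X,Z) | Z = z]`. -/
noncomputable def selRate {X : Type*} [Fintype X] (P : X × Bool × Bool → ℝ) (f : X × Bool → ℝ)
    (z : Bool) : ℝ :=
  (∑ x, f (x, z) * cellMass P x z) / gMass P z

/-- 0-1 loss of randomized classifier `f` under `P`. -/
noncomputable def loss {X : Type*} [Fintype X] (P : X × Bool × Bool → ℝ) (f : X × Bool → ℝ) : ℝ :=
  ∑ x, ∑ z, (P (x, z, true) * (1 - f (x, z)) + P (x, z, false) * f (x, z))

/-- Demographic parity: equal selection rates on the two groups. -/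
def DP {X : Type*} [Fintype X] (P : X × Bool × Bool → ℝ) (f : X × Bool → ℝ) : Prop :=
  selRate P f true = selRate P f false

/-- false positive rate of `f` on group `z`: `E[f(X,Z) | Y = 0, Z = z]`. -/
noncomputable def fpr {X : Type*} [Fintype X] (P : X × Bool × Bool → ℝ) (f : X × Bool → ℝ)
    (z : Bool) : ℝ :=
  (∑ x, f (x, z) * P (x, z, false)) / (∑ x, P (x, z, false))

/-- `f` is a (group-wise) mass-threshold classifier: within each group it accepts a
prefix of the cells sorted in decreasing order of score (fractionally at the boundary). -/
def IsPrefix {X : Type*} (P : X × Bool × Bool → ℝ) (f : X × Bool → ℝ) : Prop :=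
  ∀ z x x', 0 < cellMass P x z → 0 < cellMass P x' z →
    score P x' z < score P x z → 0 < f (x', z) → f (x, z) = 1

/-- cells of equal score within a group have been merged, i.e. scores of distinct
positive-mass cells within a group are distinct ("strictly decreasing" when sorted). -/
def MergedScores {X : Type*} (P : X × Bool × Bool → ℝ) : Prop :=
  ∀ z x x', 0 < cellMass P x z → 0 < cellMass P x' z → score P x z = score P x' z → x = x'

lemma aux_exists_c {X : Type*} [Fintype X] (P : X × Bool × Bool → ℝ) (hP0 : ∀ p, 0 ≤ P p)
    (f : X × Bool → ℝ) (hf2 : IsPrefix P f)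
    (hf4 : ∀ x z, 0 < cellMass P x z → score P x z = 1 → f (x, z) = 1) (z : Bool) :
    ∃ c : ℝ, 0 ≤ c ∧ ∀ x, 0 < cellMass P x z →
      (f (x, z) < 1 → P (x, z, true) ≤ c * P (x, z, false)) ∧
      (0 < f (x, z) → c * P (x, z, false) ≤ P (x, z, true)) := by
  classical
  set A : Finset X := Finset.univ.filter (fun x => 0 < cellMass P x z ∧ f (x, z) < 1) with hA
  by_cases hAne : A.Nonempty
  · obtain ⟨a, haA, hamax⟩ := A.exists_max_image (fun x => score P x z) hAne
    rw [hA, Finset.mem_filter] at haA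
    obtain ⟨-, ham, haf⟩ := haA
    set t : ℝ := score P a z with ht
    have ht0 : 0 ≤ t := div_nonneg (hP0 _) (le_of_lt ham)
    have ht1 : t < 1 := by
      have hle : t ≤ 1 := by
        rw [ht]; unfold score
        rw [div_le_one ham]
        unfold cellMass
        linarith [hP0 (a, z, false)]
      rcases lt_or_eq_of_le hle with h | h
      · exact h
      · exact absurd (hf4 a z ham h) (ne_of_lt haf)
    have h1t : 0 < 1 - t := by linarith
    refine ⟨t / (1 - t), div_nonneg ht0 (le_of_lt h1t), fun x hxm => ?_⟩
    have hcm : cellMass P x z = P (x, z, false) + P (x, z, true) := rfl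
    constructor
    · intro hflt
      have hxA : x ∈ A := by rw [hA]; simp [hxm, hflt]
      have hsle : score P x z ≤ t := hamax x hxA
      have : P (x, z, true) ≤ t * cellMass P x z := by
        have := (div_le_iff₀ hxm).mp hsle
        exact this
      rw [div_mul_eq_mul_div, le_div_iff₀ h1t]
      rw [hcm] at this
      nlinarith
    · intro hfpos
      have hsle : t ≤ score P x z := by
        by_contra hlt
        push_neg at hlt
        exact absurd (hf2 z a x ham hxm hlt hfpos) (ne_of_lt haf)
      have : t * cellMass P x z ≤ P (x, z, true) := by
        have := (le_div_iff₀ hxm).mp hsle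
        exact this
      rw [div_mul_eq_mul_div, div_le_iff₀ h1t]
      rw [hcm] at this
      nlinarith
  · refine ⟨0, le_refl 0, fun x hxm => ⟨fun hflt => ?_, fun _ => ?_⟩⟩
    · exact absurd ⟨x, by rw [hA]; simp [hxm, hflt]⟩ hAne
    · rw [zero_mul]; exact hP0 _

theorem stmt11' {X : Type*} [Fintype X] (P : X × Bool × Bool → ℝ) (hP : IsDist P)
    (hm : MergedScores P) (h0 : ∀ z, 0 < ∑ x, P (x, z, false))
    (r : ℝ) (hr : r ∈ Set.Icc (0 : ℝ) 1)
    (f : X × Bool → ℝ) (hf1 : InUnit f) (hf2 : IsPrefix P f)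
    (hf4 : ∀ x z, 0 < cellMass P x z → score P x z = 1 → f (x, z) = 1)
    (hf3 : ∀ z, fpr P f z = r)
    (g : X × Bool → ℝ) (hg1 : InUnit g) (hg3 : ∀ z, fpr P g z = r) :
    loss P f ≤ loss P g ∧
      ((∃ x z, 0 < cellMass P x z ∧ f (x, z) ≠ g (x, z)) → loss P f < loss P g) := by
  classical
  obtain ⟨hP0, -⟩ := hP
  have hzero : ∀ x z, ¬ (0 < cellMass P x z) → P (x, z, false) = 0 ∧ P (x, z, true) = 0 := by
    intro x z h
    have h0' := hP0 (x, z, false); have h1' := hP0 (x, z, true)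
    have hle : cellMass P x z ≤ 0 := le_of_not_gt h
    unfold cellMass at hle
    constructor <;> linarith
  choose c hc0 hc using fun z => aux_exists_c P hP0 f hf2 hf4 z
  -- numerator equality from equal FPRs
  have hnum : ∀ z, ∑ x, (f (x, z) - g (x, z)) * P (x, z, false) = 0 := by
    intro z
    have hd := h0 z
    have hfe : ∑ x, f (x, z) * P (x, z, false) = r * ∑ x, P (x, z, false) := by
      have h := hf3 z; unfold fpr at h; exact (div_eq_iff (ne_of_gt hd)).mp h
    have hge : ∑ x, g (x, z) * P (x, z, false) = r * ∑ x, P (x, z, false) := by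
      have h := hg3 z; unfold fpr at h; exact (div_eq_iff (ne_of_gt hd)).mp h
    have : ∀ x ∈ (Finset.univ : Finset X), (f (x, z) - g (x, z)) * P (x, z, false)
        = f (x, z) * P (x, z, false) - g (x, z) * P (x, z, false) := fun x _ => by ring
    rw [Finset.sum_congr rfl this, Finset.sum_sub_distrib, hfe, hge, sub_self]
  -- pointwise nonnegativity
  have key : ∀ z x, 0 ≤ (f (x, z) - g (x, z)) * (P (x, z, true) - c z * P (x, z, false)) := by
    intro z x
    by_cases hxm : 0 < cellMass P x z
    · obtain ⟨h1, h2⟩ := hc z x hxm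
      rcases lt_trichotomy (P (x, z, true)) (c z * P (x, z, false)) with hlt | heq | hgt
      · have hf0 : f (x, z) = 0 := by
          by_contra h
          have hp : 0 < f (x, z) := lt_of_le_of_ne (hf1 (x, z)).1 (Ne.symm h)
          exact absurd (h2 hp) (not_le.mpr hlt)
        have hg0 := (hg1 (x, z)).1
        rw [hf0]; nlinarith
      · rw [heq]; simp
      · have hfo : f (x, z) = 1 := by
          by_contra h
          have hp : f (x, z) < 1 := lt_of_le_of_ne (hf1 (x, z)).2 h
          exact absurd (h1 hp) (not_le.mpr hgt)
        have hg1' := (hg1 (x, z)).2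
        rw [hfo]; nlinarith
    · obtain ⟨e0, e1⟩ := hzero x z hxm
      rw [e0, e1]
      simp
  have hsum : ∀ z, ∑ x, (f (x, z) - g (x, z)) * P (x, z, true)
      = ∑ x, (f (x, z) - g (x, z)) * (P (x, z, true) - c z * P (x, z, false)) := by
    intro z
    have he : ∀ x ∈ (Finset.univ : Finset X),
        (f (x, z) - g (x, z)) * (P (x, z, true) - c z * P (x, z, false))
        = (f (x, z) - g (x, z)) * P (x, z, true)
          - c z * ((f (x, z) - g (x, z)) * P (x, z, false)) := fun x _ => by ring
    rw [Finset.sum_congr rfl he, Finset.sum_sub_distrib, ← Finset.mul_sum, hnum z, mul_zero,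
      sub_zero]
  have hz : ∀ z, 0 ≤ ∑ x, (f (x, z) - g (x, z)) * P (x, z, true) := by
    intro z
    rw [hsum z]
    exact Finset.sum_nonneg fun x _ => key z x
  have hloss : loss P g - loss P f = ∑ z : Bool, ∑ x, (f (x, z) - g (x, z)) * P (x, z, true) := by
    unfold loss
    rw [Finset.sum_comm (γ := X) (α := Bool), Finset.sum_comm (γ := X) (α := Bool),
      ← Finset.sum_sub_distrib]
    apply Finset.sum_congr rfl
    intro z _
    rw [← Finset.sum_sub_distrib]
    have he : ∀ x ∈ (Finset.univ : Finset X),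
        (P (x, z, true) * (1 - g (x, z)) + P (x, z, false) * g (x, z))
          - (P (x, z, true) * (1 - f (x, z)) + P (x, z, false) * f (x, z))
        = (f (x, z) - g (x, z)) * P (x, z, true)
          - (f (x, z) - g (x, z)) * P (x, z, false) := fun x _ => by ring
    rw [Finset.sum_congr rfl he, Finset.sum_sub_distrib, hnum z, sub_zero]
  constructor
  · have : 0 ≤ loss P g - loss P f := by
      rw [hloss]
      exact Finset.sum_nonneg fun z _ => hz z
    linarith
  · rintro ⟨x0, z0, hx0m, hne⟩
    have hS : 0 < ∑ x, (f (x, z0) - g (x, z0)) * P (x, z0, true) := by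
      rw [hsum z0]
      by_contra hcon
      push_neg at hcon
      have hS0 : ∑ x, (f (x, z0) - g (x, z0)) * (P (x, z0, true) - c z0 * P (x, z0, false)) = 0 :=
        le_antisymm hcon (Finset.sum_nonneg fun x _ => key z0 x)
      have hall : ∀ x, (f (x, z0) - g (x, z0)) * (P (x, z0, true) - c z0 * P (x, z0, false)) = 0 := by
        intro x
        exact (Finset.sum_eq_zero_iff_of_nonneg fun x _ => key z0 x).mp hS0 x (Finset.mem_univ x)
      have hthr : ∀ x, 0 < cellMass P x z0 → f (x, z0) ≠ g (x, z0) →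
          P (x, z0, true) = c z0 * P (x, z0, false) ∧ 0 < P (x, z0, false) := by
        intro x hxm hne'
        have heq : P (x, z0, true) = c z0 * P (x, z0, false) := by
          rcases mul_eq_zero.mp (hall x) with h | h
          · exact absurd (sub_eq_zero.mp h) hne'
          · linarith [sub_eq_zero.mp h]
        refine ⟨heq, ?_⟩
        rcases lt_or_eq_of_le (hP0 (x, z0, false)) with h | h
        · exact h
        · exfalso
          have hcm : cellMass P x z0 = P (x, z0, false) + P (x, z0, true) := rfl
          rw [hcm, ← h] at hxm
          rw [← h, mul_zero] at heq
          linarith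
      have hscore : ∀ x, 0 < cellMass P x z0 → f (x, z0) ≠ g (x, z0) →
          score P x z0 = c z0 / (1 + c z0) := by
        intro x hxm hne'
        obtain ⟨heq, hpos⟩ := hthr x hxm hne'
        have hcm : cellMass P x z0 = P (x, z0, false) + P (x, z0, true) := rfl
        unfold score
        rw [hcm, heq]
        rw [div_eq_div_iff (by nlinarith [hc0 z0]) (by nlinarith [hc0 z0])]
        ring
      have hsingle : ∑ x, (f (x, z0) - g (x, z0)) * P (x, z0, false)
          = (f (x0, z0) - g (x0, z0)) * P (x0, z0, false) := by
        apply Finset.sum_eq_single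
        · intro x _ hxne
          by_cases hxm : 0 < cellMass P x z0
          · by_cases hfg : f (x, z0) = g (x, z0)
            · rw [hfg, sub_self, zero_mul]
            · exact absurd (hm z0 x x0 hxm hx0m
                ((hscore x hxm hfg).trans (hscore x0 hx0m hne).symm)) hxne
          · rw [(hzero x z0 hxm).1, mul_zero]
        · intro h; exact absurd (Finset.mem_univ x0) h
      have hn0 := hnum z0
      rw [hsingle] at hn0
      exact mul_ne_zero (sub_ne_zero.mpr hne) (ne_of_gt (hthr x0 hx0m hne).2) hn0
    have : 0 < loss P g - loss P f := by
      rw [hloss]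
      refine Finset.sum_pos' (fun z _ => hz z) ⟨z0, Finset.mem_univ z0, hS⟩
    linarith

/-- Among randomized classifiers with false positive rate `r` on both groups (hence
satisfying predictive equality), the group-wise mass-threshold classifier `f_r` (which
also accepts all score-1 cells, as in the definition of `f_0`) minimizes the 0-1 loss;
any competitor differing from it on a positive-mass point has strictly larger loss. -/
theorem stmt11 {X : Type*} [Fintype X] (P : X × Bool × Bool → ℝ) (hP : IsDist P)
    (hm : MergedScores P) (h0 : ∀ z, 0 < ∑ x, P (x, z, false))
    (r : ℝ) (hr : r ∈ Set.Icc (0 : ℝ) 1)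
    (f : X × Bool → ℝ) (hf1 : InUnit f) (hf2 : IsPrefix P f)
    (hf4 : ∀ x z, 0 < cellMass P x z → score P x z = 1 → f (x, z) = 1)
    (hf3 : ∀ z, fpr P f z = r)
    (g : X × Bool → ℝ) (hg1 : InUnit g) (hg3 : ∀ z, fpr P g z = r) :
    loss P f ≤ loss P g ∧
      ((∃ x z, 0 < cellMass P x z ∧ f (x, z) ≠ g (x, z)) → loss P f < loss P g) := by
  exact stmt11' P hP hm h0 r hr f hf1 hf2 hf4 hf3 g hg1 hg3
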